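/- Let R be block diagonal symmetric positive definite, S symmetric positive semidefinite, Π_i a block selector matrix, Î_i := I − Π_iΠ_i^T, Z := (R+S)^{-1}, Z_i := Π_i(Π_i^T(R+S)Π_i)^{-1}Π_i^T. Then M := Z( Î_iZ^{-1} + Z^{-1}Î_i − Î_i(R+S)Î_i + Z^{-1}Z_iZ^{-1} − Î_iSZ_iZ^{-1} − Z^{-1}Z_iSÎ_i + Î_iSZ_iSÎ_i )Z equals Z. -/

import Mathlib

open Matrix

/-- Noncommutative-ring core of the computation. -/
lemma stmt11_aux {α : Type*} [Ring α] (R S Q Zi : α)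
    (e1 : (R + Q * S) * Zi = Q)
    (e3 : Q * R * Q = Q * R) :
    (1 - Q) * (R + S) + (R + S) * (1 - Q) - (1 - Q) * (R + S) * (1 - Q)
      + (R + S) * Zi * (R + S) - (1 - Q) * S * Zi * (R + S)
      - (R + S) * Zi * S * (1 - Q) + (1 - Q) * S * Zi * S * (1 - Q) = R + S := by
  have key1 : (R + S) * Zi * (R + S) - (1 - Q) * S * Zi * (R + S)
      - (R + S) * Zi * S * (1 - Q) + (1 - Q) * S * Zi * S * (1 - Q)
      = Q * (R + S) * Q := by
    calc (R + S) * Zi * (R + S) - (1 - Q) * S * Zi * (R + S)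
        - (R + S) * Zi * S * (1 - Q) + (1 - Q) * S * Zi * S * (1 - Q)
        = (R + Q * S) * Zi * (R + S * Q) := by noncomm_ring
      _ = Q * (R + S * Q) := by rw [e1]
      _ = Q * R + Q * S * Q := by noncomm_ring
      _ = Q * R * Q + Q * S * Q := by rw [e3]
      _ = Q * (R + S) * Q := by noncomm_ring
  have key2 : (1 - Q) * (R + S) + (R + S) * (1 - Q) - (1 - Q) * (R + S) * (1 - Q)
      = (R + S) - Q * (R + S) * Q := by noncomm_ring
  calc (1 - Q) * (R + S) + (R + S) * (1 - Q) - (1 - Q) * (R + S) * (1 - Q)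
      + (R + S) * Zi * (R + S) - (1 - Q) * S * Zi * (R + S)
      - (R + S) * Zi * S * (1 - Q) + (1 - Q) * S * Zi * S * (1 - Q)
      = ((1 - Q) * (R + S) + (R + S) * (1 - Q) - (1 - Q) * (R + S) * (1 - Q))
        + ((R + S) * Zi * (R + S) - (1 - Q) * S * Zi * (R + S)
          - (R + S) * Zi * S * (1 - Q) + (1 - Q) * S * Zi * S * (1 - Q)) := by abel
    _ = ((R + S) - Q * (R + S) * Q) + Q * (R + S) * Q := by rw [key1, key2]
    _ = R + S := by abel

theorem stmt11 {n r : ℕ} {d : Fin n → ℕ}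
    (Sel : ∀ i : Fin n, Matrix (Fin r) (Fin (d i)) ℝ)
    (hortho : ∀ i, (Sel i)ᵀ * Sel i = 1)
    (hsum : ∑ i, Sel i * (Sel i)ᵀ = 1)
    (R S : Matrix (Fin r) (Fin r) ℝ) (hR : R.PosDef)
    (hblk : ∀ j k, j ≠ k → (Sel j)ᵀ * R * Sel k = 0)
    (hS : S.PosSemidef)
    (i : Fin n)
    (Ihat : Matrix (Fin r) (Fin r) ℝ) (hIhat : Ihat = 1 - Sel i * (Sel i)ᵀ)
    (Z : Matrix (Fin r) (Fin r) ℝ) (hZ : Z = (R + S)⁻¹)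
    (Zi : Matrix (Fin r) (Fin r) ℝ)
    (hZi : Zi = Sel i * ((Sel i)ᵀ * (R + S) * Sel i)⁻¹ * (Sel i)ᵀ) :
    Z * (Ihat * Z⁻¹ + Z⁻¹ * Ihat - Ihat * (R + S) * Ihat
      + Z⁻¹ * Zi * Z⁻¹ - Ihat * S * Zi * Z⁻¹ - Z⁻¹ * Zi * S * Ihat
      + Ihat * S * Zi * S * Ihat) * Z = Z := by
  have hPtP : (Sel i)ᵀ * Sel i = 1 := hortho i
  have hA : (R + S).PosDef := hR.add_posSemidef hS
  have hAdet : IsUnit (R + S).det := isUnit_iff_ne_zero.mpr (ne_of_gt hA.det_pos)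
  -- B := (Sel i)ᵀ * (R + S) * Sel i is positive definite
  have hBpd : ((Sel i)ᵀ * (R + S) * Sel i).PosDef := by
    refine Matrix.PosDef.of_dotProduct_mulVec_pos ?_ (fun x hx => ?_)
    · have := isHermitian_conjTranspose_mul_mul (Sel i) hA.1
      simpa [conjTranspose_eq_transpose_of_trivial] using this
    · have hPx : Sel i *ᵥ x ≠ 0 := by
        intro h
        apply hx
        have : (Sel i)ᵀ *ᵥ (Sel i *ᵥ x) = x := by
          rw [mulVec_mulVec, hPtP, one_mulVec]
        rw [h, mulVec_zero] at this
        exact this.symm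
      refine lt_of_lt_of_eq (hA.dotProduct_mulVec_pos hPx) ?_
      simp only [star_mulVec, dotProduct_mulVec, vecMul_vecMul,
        conjTranspose_eq_transpose_of_trivial]
  have hBdet : IsUnit ((Sel i)ᵀ * (R + S) * Sel i).det :=
    isUnit_iff_ne_zero.mpr (ne_of_gt hBpd.det_pos)
  have hBBinv : ((Sel i)ᵀ * (R + S) * Sel i) * ((Sel i)ᵀ * (R + S) * Sel i)⁻¹ = 1 :=
    Matrix.mul_nonsing_inv _ hBdet
  have hRsymm : Rᵀ = R := by
    rw [← conjTranspose_eq_transpose_of_trivial R]; exact hR.1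
  -- block-diagonality facts
  have hPR : (Sel i)ᵀ * R = (Sel i)ᵀ * (R * (Sel i * (Sel i)ᵀ)) := by
    conv_lhs => rw [← Matrix.mul_one ((Sel i)ᵀ * R), ← hsum]
    rw [Matrix.mul_sum]
    rw [Finset.sum_eq_single_of_mem i (Finset.mem_univ i) (fun j _ hj => by
      rw [← Matrix.mul_assoc, hblk i j (Ne.symm hj), Matrix.zero_mul])]
    rw [Matrix.mul_assoc]
  have hRP : R * Sel i = Sel i * ((Sel i)ᵀ * (R * Sel i)) := by
    conv_lhs => rw [← Matrix.one_mul (R * Sel i), ← hsum]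
    rw [Matrix.sum_mul]
    rw [Finset.sum_eq_single_of_mem i (Finset.mem_univ i) (fun j _ hj => by
      rw [Matrix.mul_assoc, ← Matrix.mul_assoc ((Sel j)ᵀ) R (Sel i),
        hblk j i hj, Matrix.mul_zero])]
    rw [Matrix.mul_assoc]
  -- e3
  have e3 : (Sel i * (Sel i)ᵀ) * R * (Sel i * (Sel i)ᵀ) = (Sel i * (Sel i)ᵀ) * R := by
    calc (Sel i * (Sel i)ᵀ) * R * (Sel i * (Sel i)ᵀ)
        = Sel i * ((Sel i)ᵀ * (R * (Sel i * (Sel i)ᵀ))) := by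
          rw [Matrix.mul_assoc, Matrix.mul_assoc]
      _ = Sel i * ((Sel i)ᵀ * R) := by rw [← hPR]
      _ = (Sel i * (Sel i)ᵀ) * R := by rw [Matrix.mul_assoc]
  -- e1
  have h1 : (R + Sel i * (Sel i)ᵀ * S) * Sel i
      = Sel i * ((Sel i)ᵀ * (R + S) * Sel i) := by
    simp only [Matrix.add_mul, Matrix.mul_add, Matrix.mul_assoc]
    conv_lhs => rw [hRP]
  have e1 : (R + Sel i * (Sel i)ᵀ * S) * Zi = Sel i * (Sel i)ᵀ := by
    rw [hZi, ← Matrix.mul_assoc, ← Matrix.mul_assoc, h1,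
      Matrix.mul_assoc (Sel i) ((Sel i)ᵀ * (R + S) * Sel i) (((Sel i)ᵀ * (R + S) * Sel i)⁻¹),
      hBBinv, Matrix.mul_one]
  -- Z⁻¹ = R + S
  have hZinv : Z⁻¹ = R + S := by
    rw [hZ, Matrix.nonsing_inv_nonsing_inv _ hAdet]
  have hmid : Ihat * Z⁻¹ + Z⁻¹ * Ihat - Ihat * (R + S) * Ihat
      + Z⁻¹ * Zi * Z⁻¹ - Ihat * S * Zi * Z⁻¹ - Z⁻¹ * Zi * S * Ihat
      + Ihat * S * Zi * S * Ihat = R + S := by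
    rw [hZinv, hIhat]
    exact stmt11_aux R S (Sel i * (Sel i)ᵀ) Zi e1 e3
  rw [hmid, hZ, Matrix.nonsing_inv_mul _ hAdet, Matrix.one_mul]
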